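/- arXiv:1812.10393 — 2 statements merged into one kernel-verified Lean document; each statement's English description precedes it below -/
import Mathlib

section
/- Let a > 0, r > 0 and let g : ℝ → ℂ be a Schwartz function. Define (F_r g)(x) = √(a r/π) ∫_ℝ g(t)·e^{i a r x t} dt. Then for every z ∈ ℂ, [B_{a/2}(F_r g)](z) = 2·√( r/(r²+1) ) · e^{−(a/4)·z²·(r²−1)/(r²+1)} · ∫_ℂ (B_{a/2}g)(w) · e^{(a/4)·conj(w)²·(1−r²)/(r²+1)} · e^{i a r z conj(w)/(r²+1)} dλ_{a/2}(w), and the integral over ℂ converges. -/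
open Complex Real SchwartzMap MeasureTheory

/-- The (parametrized) Bargmann transform `B_{a/2}`:
`(B_{a/2}f)(z) = (a/π)^{1/4} ∫_ℝ f(x) e^{axz − (a/2)x² − (a/4)z²} dx`. -/
noncomputable def bargmann (a : ℝ) (f : ℝ → ℂ) (z : ℂ) : ℂ :=
  ((a / Real.pi) ^ ((1 : ℝ) / 4) : ℝ) *
    ∫ x : ℝ, f x * Complex.exp (a * x * z - (a / 2) * x ^ 2 - (a / 4) * z ^ 2)

/-- The generalized Fourier transform `(F_r g)(x) = √(ar/π) ∫ g(t) e^{iarxt} dt`. -/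
noncomputable def fourierR (a r : ℝ) (g : ℝ → ℂ) (x : ℝ) : ℂ :=
  (Real.sqrt (a * r / Real.pi) : ℂ) *
    ∫ t : ℝ, g t * Complex.exp (Complex.I * a * r * x * t)

/-- The density of the Gaussian measure `dλ_{a/2}` on `ℂ` with respect to Lebesgue
measure on `ℂ ≅ ℝ²`. -/
noncomputable def gaussianDensity (a : ℝ) (w : ℂ) : ℝ :=
  (a / (2 * Real.pi)) * Real.exp (-(a / 2) * ‖w‖ ^ 2)

/-! ### Auxiliary lemmas -/

lemma bft_symm_apply (p : ℝ × ℝ) :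
    Complex.measurableEquivRealProd.symm p = p.1 + p.2 * I := by
  have h : Complex.measurableEquivRealProd (p.1 + p.2 * I) = p := by
    simp [Complex.measurableEquivRealProd]
  conv_lhs => rw [← h]
  exact MeasurableEquiv.symm_apply_apply _ _

lemma bft_integrable_iff_comp (f : ℂ → ℂ) :
    Integrable f (volume : Measure ℂ) ↔
      Integrable (fun p : ℝ × ℝ => f (p.1 + p.2 * I)) := by
  rw [← (Complex.volume_preserving_equiv_real_prod.symm).integrable_comp_emb
    (MeasurableEquiv.measurableEmbedding _)]
  simp only [Function.comp_def, bft_symm_apply]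

lemma bft_integral_comp (f : ℂ → ℂ) :
    ∫ w : ℂ, f w = ∫ p : ℝ × ℝ, f (p.1 + p.2 * I) := by
  rw [← (Complex.volume_preserving_equiv_real_prod.symm).integral_comp
    (MeasurableEquiv.measurableEmbedding _) f]
  simp only [bft_symm_apply]

lemma bft_integrable_exp_quad {b : ℝ} (hb : 0 < b) (c : ℝ) :
    Integrable fun x : ℝ => Real.exp (-b*x^2 + c*x) := by
  have h := (integrable_cexp_quadratic (b := (b:ℂ)) (by simpa using hb) (c:ℂ) 0).norm
  refine h.congr (Filter.Eventually.of_forall fun x => ?_)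
  have : (-(b:ℂ)*x^2 + c*x + 0) = ((-b*x^2 + c*x : ℝ) : ℂ) := by push_cast; ring
  simp only [Complex.norm_exp, this, Complex.ofReal_re]

lemma bft_cpow_half {u : ℝ} (hu : 0 ≤ u) : (u:ℂ) ^ ((1:ℂ)/2) = (Real.sqrt u : ℂ) := by
  rw [show ((1:ℂ)/2) = ((1/2 : ℝ):ℂ) by norm_num, ← Complex.ofReal_cpow hu,
    Real.sqrt_eq_rpow]

/-! ### The exponent on the complex plane side -/

noncomputable def Eexp (a s : ℝ) (β : ℂ) (t x y : ℝ) : ℂ :=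
  a*t*(x+y*I) - (a/2)*t^2 - (a/4)*(x+y*I)^2 + (a/4)*s*(x-y*I)^2 + β*(x-y*I) - (a/2)*(x^2+y^2)

lemma Eexp_re (a s : ℝ) (β : ℂ) (t x y : ℝ) :
    (Eexp a s β t x y).re = a*t*x - (a/2)*t^2 - (a/4)*(1-s)*(x^2-y^2)
      + β.re*x + β.im*y - (a/2)*(x^2+y^2) := by
  simp [Eexp, Complex.add_re, Complex.sub_re, Complex.mul_re, Complex.mul_im,
    Complex.add_im, Complex.sub_im, Complex.ofReal_re, Complex.ofReal_im, pow_two]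
  ring

lemma continuous_Eexp (a s : ℝ) (β : ℂ) :
    Continuous (fun q : (ℝ × ℝ) × ℝ => Eexp a s β q.2 q.1.1 q.1.2) := by
  unfold Eexp; fun_prop

lemma key_integrable (a s : ℝ) (ha : 0 < a) (hs1 : -1 < s) (hs2 : s < 1) (β : ℂ)
    (g : SchwartzMap ℝ ℂ) :
    Integrable (fun q : (ℝ × ℝ) × ℝ => g q.2 * Complex.exp (Eexp a s β q.2 q.1.1 q.1.2))
      ((volume : Measure (ℝ × ℝ)).prod volume) := by
  set lam : ℝ := (2/(3-s) + 1)/2 with hlam_def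
  have h3s : (0:ℝ) < 3 - s := by linarith
  have hfrac : 2/(3-s) < 1 := by rw [div_lt_one h3s]; linarith
  have hfrac0 : 0 < 2/(3-s) := by positivity
  have hlam0 : 0 < lam := by rw [hlam_def]; positivity
  have hlam1 : lam < 1 := by rw [hlam_def]; linarith
  have hlam2 : 2/(3-s) < lam := by rw [hlam_def]; linarith
  have hkey : 2 < lam * (3 - s) := (div_lt_iff₀ h3s).mp hlam2
  have hcx : 0 < (a/4)*(3-s) - a/(2*lam) := by
    have h1 : a/(2*lam) < (a/4)*(3-s) := by
      rw [div_lt_iff₀ (by linarith)]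
      nlinarith
    linarith
  have hcy : 0 < (a/4)*(1+s) := mul_pos (by linarith) (by linarith)
  refine (Integrable.mul_prod (β := ℝ)
    (f := fun p : ℝ × ℝ => Real.exp (-((a/4)*(3-s) - a/(2*lam))*p.1^2 + β.re*p.1) *
      Real.exp (-((a/4)*(1+s))*p.2^2 + β.im*p.2))
    (g := fun t : ℝ => ‖g t‖) ?_ g.integrable.norm).mono' ?_ ?_
  · rw [Measure.volume_eq_prod]
    exact Integrable.mul_prod (bft_integrable_exp_quad hcx β.re) (bft_integrable_exp_quad hcy β.im)
  · exact ((g.continuous.comp continuous_snd).mul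
      (Complex.continuous_exp.comp (continuous_Eexp a s β))).aestronglyMeasurable
  · refine Filter.Eventually.of_forall fun q => ?_
    obtain ⟨⟨x, y⟩, t⟩ := q
    simp only [norm_mul, Complex.norm_exp, Eexp_re, Real.norm_eq_abs,
      _root_.abs_of_nonneg (Real.exp_nonneg _)]
    rw [mul_comm ‖g t‖]
    refine mul_le_mul_of_nonneg_right ?_ (norm_nonneg _)
    rw [← Real.exp_add, Real.exp_le_exp]
    have hstep : a*t*x ≤ a/2*t^2 + a/(2*lam)*x^2 := by
      have h1 : 0 ≤ a/(2*lam) * (lam*t - x)^2 :=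
        mul_nonneg (div_pos ha (by linarith)).le (sq_nonneg _)
      have h2 : a/(2*lam) * (lam*t - x)^2 = a*lam/2*t^2 - a*t*x + a/(2*lam)*x^2 := by
        field_simp; ring
      nlinarith [mul_nonneg (mul_nonneg ha.le (by linarith : (0:ℝ) ≤ 1-lam)) (sq_nonneg t)]
    linarith [hstep]

lemma Eexp_y_form (a s : ℝ) (β : ℂ) (t x y : ℝ) :
    Eexp a s β t x y = ((-(a/4)*(1+s) : ℝ) : ℂ) * y^2
      + (I*((a:ℂ)*t - (a/2)*(1+s)*x - β)) * y
      + ((a:ℂ)*t*x - (a/2)*t^2 - (a/4)*(3-s)*x^2 + β*x) := by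
  simp only [Eexp]; push_cast; ring_nf
  simp only [Complex.I_sq]; ring

lemma int2d (a s : ℝ) (ha : 0 < a) (hs1 : -1 < s) (hs2 : s < 1) (β : ℂ) (t : ℝ) :
    Integrable (fun p : ℝ × ℝ => Complex.exp (Eexp a s β t p.1 p.2))
      (volume : Measure (ℝ × ℝ)) := by
  have hcx : 0 < (a/4)*(3-s) := mul_pos (by linarith) (by linarith)
  have hcy : 0 < (a/4)*(1+s) := mul_pos (by linarith) (by linarith)
  have hint : Integrable (fun p : ℝ × ℝ => Real.exp (-(a/2)*t^2) *
      (Real.exp (-((a/4)*(3-s))*p.1^2 + (a*t+β.re)*p.1) *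
       Real.exp (-((a/4)*(1+s))*p.2^2 + β.im*p.2))) (volume : Measure (ℝ × ℝ)) := by
    rw [Measure.volume_eq_prod]
    exact ((bft_integrable_exp_quad hcx _).mul_prod (bft_integrable_exp_quad hcy _)).const_mul _
  refine hint.mono' ?_ (Filter.Eventually.of_forall fun p => ?_)
  · have : Continuous fun p : ℝ × ℝ => Eexp a s β t p.1 p.2 := by unfold Eexp; fun_prop
    exact (Complex.continuous_exp.comp this).aestronglyMeasurable
  · rw [Complex.norm_exp, Eexp_re, ← Real.exp_add, ← Real.exp_add]
    exact Real.exp_le_exp.2 (le_of_eq (by ring))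

lemma W_eval (a s : ℝ) (ha : 0 < a) (hs1 : -1 < s) (hs2 : s < 1) (β : ℂ) (t : ℝ) :
    ∫ p : ℝ × ℝ, Complex.exp (Eexp a s β t p.1 p.2)
      = ((Real.sqrt (Real.pi/((a/4)*(1+s))) * Real.sqrt (Real.pi/a) : ℝ) : ℂ) *
        Complex.exp ((a/2)*(t:ℂ)^2 - ((a:ℂ)*t - β)^2/((a:ℂ)*(1+s))) := by
  have ha' : (a:ℂ) ≠ 0 := by exact_mod_cast ha.ne'
  have hs' : (1:ℂ) + (s:ℂ) ≠ 0 := by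
    have : ((1+s : ℝ):ℂ) ≠ 0 := by exact_mod_cast (by linarith : (0:ℝ) < 1 + s).ne'
    push_cast at this; exact this
  have hby : (((-(a/4)*(1+s) : ℝ) : ℂ)).re < 0 := by
    simp only [Complex.ofReal_re]; nlinarith
  have hbx : (((-a : ℝ) : ℂ)).re < 0 := by simp only [Complex.ofReal_re]; linarith
  rw [Measure.volume_eq_prod,
    integral_prod _ (by rw [← Measure.volume_eq_prod]; exact int2d a s ha hs1 hs2 β t)]
  have step1 : ∀ x : ℝ, (∫ y : ℝ, Complex.exp (Eexp a s β t x y))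
      = (↑Real.pi / -((-(a/4)*(1+s) : ℝ) : ℂ)) ^ ((1:ℂ)/2) *
        Complex.exp (((-a : ℝ) : ℂ) * x^2 + (2*(a:ℂ)*t) * x
          + (-(a/2)*(t:ℂ)^2 - ((a:ℂ)*t - β)^2/((a:ℂ)*(1+s)))) := by
    intro x
    rw [show (fun y : ℝ => Complex.exp (Eexp a s β t x y)) = fun y : ℝ =>
        Complex.exp (((-(a/4)*(1+s) : ℝ) : ℂ) * y^2
          + (I*((a:ℂ)*t - (a/2)*(1+s)*x - β)) * y
          + ((a:ℂ)*t*x - (a/2)*t^2 - (a/4)*(3-s)*x^2 + β*x)) from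
      funext fun y => by rw [Eexp_y_form]]
    rw [integral_cexp_quadratic hby]
    congr 1
    have hD : (4*((-(a/4)*(1+s) : ℝ) : ℂ)) = -((a:ℂ)*(1+(s:ℂ))) := by push_cast; ring
    rw [hD, div_neg, sub_neg_eq_add]
    congr 1
    field_simp [ha', hs']
    ring_nf
    simp only [Complex.I_sq]
    push_cast; ring
  simp_rw [step1]
  rw [integral_const_mul, integral_cexp_quadratic hbx]
  have hA : (0:ℝ) ≤ Real.pi/((a/4)*(1+s)) :=
    (div_pos Real.pi_pos (mul_pos (by linarith) (by linarith))).le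
  have hB : (0:ℝ) ≤ Real.pi/a := (div_pos Real.pi_pos ha).le
  rw [show ((Real.pi:ℂ) / -((-(a/4)*(1+s) : ℝ) : ℂ)) = ((Real.pi/((a/4)*(1+s)) : ℝ) : ℂ) by
      push_cast; ring,
    show ((Real.pi:ℂ) / -((-a : ℝ) : ℂ)) = ((Real.pi/a : ℝ) : ℂ) by push_cast; ring,
    bft_cpow_half hA, bft_cpow_half hB]
  push_cast
  rw [← mul_assoc]
  congr 2
  field_simp [ha']
  ring

/-! ### The Fourier-side exponent -/

noncomputable def E2exp (a r : ℝ) (z : ℂ) (x t : ℝ) : ℂ :=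
  I*(a:ℂ)*r*x*t + (a:ℂ)*x*z - ((a/2 : ℝ):ℂ)*x^2 - ((a/4 : ℝ):ℂ)*z^2

lemma E2exp_re (a r : ℝ) (z : ℂ) (x t : ℝ) :
    (E2exp a r z x t).re = a*x*z.re - (a/2)*x^2 - (a/4)*(z^2).re := by
  simp [E2exp, Complex.add_re, Complex.sub_re, Complex.mul_re, Complex.mul_im,
    Complex.ofReal_re, Complex.ofReal_im, Complex.I_re, Complex.I_im, pow_two]
  try ring

lemma lhs_integrable (a r : ℝ) (ha : 0 < a) (g : SchwartzMap ℝ ℂ) (z : ℂ) :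
    Integrable (fun q : ℝ × ℝ => g q.2 * Complex.exp (E2exp a r z q.1 q.2))
      ((volume : Measure ℝ).prod volume) := by
  refine (Integrable.mul_prod (β := ℝ)
    (f := fun x : ℝ => Real.exp (-(a/2)*x^2 + (a*z.re)*x) * Real.exp (-(a/4)*(z^2).re))
    (g := fun t : ℝ => ‖g t‖)
    ((bft_integrable_exp_quad (by linarith) _).mul_const _) g.integrable.norm).mono' ?_ ?_
  · have : Continuous fun q : ℝ × ℝ => E2exp a r z q.1 q.2 := by unfold E2exp; fun_prop
    exact ((g.continuous.comp continuous_snd).mul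
      (Complex.continuous_exp.comp this)).aestronglyMeasurable
  · refine Filter.Eventually.of_forall fun q => ?_
    obtain ⟨x, t⟩ := q
    simp only [norm_mul, Complex.norm_exp, E2exp_re, Real.norm_eq_abs,
      _root_.abs_of_nonneg (Real.exp_nonneg _), ← Real.exp_add]
    rw [mul_comm ‖g t‖]
    exact mul_le_mul_of_nonneg_right (Real.exp_le_exp.2 (le_of_eq (by ring)))
      (norm_nonneg _)

lemma lhs_eval (a r : ℝ) (ha : 0 < a) (hr : 0 < r) (g : SchwartzMap ℝ ℂ) (z : ℂ) :
    bargmann a (fourierR a r (fun x : ℝ => g x)) z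
      = (((a / Real.pi) ^ ((1:ℝ)/4) * (Real.sqrt (a*r/Real.pi) * Real.sqrt (Real.pi/(a/2))) : ℝ) : ℂ) *
        ∫ t : ℝ, g t * Complex.exp (((a/4 : ℝ):ℂ)*z^2 + I*(a:ℂ)*r*t*z - ((a/2 : ℝ):ℂ)*r^2*t^2) := by
  have ha' : (a:ℂ) ≠ 0 := by exact_mod_cast ha.ne'
  unfold bargmann fourierR
  have step1 : ∀ x : ℝ, ((Real.sqrt (a*r/Real.pi) : ℂ) *
        ∫ t : ℝ, g t * Complex.exp (I * a * r * x * t)) *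
        Complex.exp ((a:ℂ) * x * z - (a/2) * x^2 - (a/4) * z^2)
      = (Real.sqrt (a*r/Real.pi) : ℂ) * ∫ t : ℝ, g t * Complex.exp (E2exp a r z x t) := by
    intro x
    rw [mul_assoc, ← integral_mul_const]
    congr 1
    refine integral_congr_ae (Filter.Eventually.of_forall fun t => ?_)
    dsimp only
    rw [mul_assoc, ← Complex.exp_add]
    congr 2
    unfold E2exp; push_cast; ring
  simp_rw [step1]
  rw [integral_const_mul]
  rw [integral_integral_swap (lhs_integrable a r ha g z)]
  have step2 : ∀ t : ℝ, (∫ x : ℝ, g t * Complex.exp (E2exp a r z x t))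
      = g t * ((Real.sqrt (Real.pi/(a/2)) : ℂ) *
          Complex.exp (((a/4 : ℝ):ℂ)*z^2 + I*(a:ℂ)*r*t*z - ((a/2 : ℝ):ℂ)*r^2*t^2)) := by
    intro t
    rw [integral_const_mul]
    congr 1
    have hform : ∀ x : ℝ, E2exp a r z x t
        = ((-(a/2) : ℝ):ℂ) * x^2 + ((a:ℂ)*z + I*(a:ℂ)*r*t) * x + (-((a/4 : ℝ):ℂ)*z^2) := by
      intro x; unfold E2exp; push_cast; ring
    simp_rw [hform]
    rw [integral_cexp_quadratic (by simp only [Complex.ofReal_re]; linarith)]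
    rw [show ((Real.pi:ℂ) / -((-(a/2) : ℝ):ℂ)) = ((Real.pi/(a/2) : ℝ):ℂ) by push_cast; ring,
      bft_cpow_half (by positivity)]
    congr 1
    have h2 : (4 * ((-(a/2) : ℝ):ℂ)) = -(2*(a:ℂ)) := by push_cast; ring
    rw [h2, div_neg, sub_neg_eq_add]
    field_simp [ha']
    ring_nf
    simp only [Complex.I_sq]
    congr 1
    field_simp [ha']
    push_cast; ring
  simp_rw [step2]
  simp_rw [mul_left_comm]
  rw [integral_const_mul]
  push_cast
  ring

lemma hGF (a r : ℝ) (g : SchwartzMap ℝ ℂ) (z : ℂ) (p : ℝ × ℝ) :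
    bargmann a (fun x : ℝ => g x) (p.1 + p.2 * I) *
      Complex.exp ((a / 4) * (starRingEnd ℂ) (p.1 + p.2 * I) ^ 2 * ((1 - r ^ 2) / (r ^ 2 + 1))) *
      Complex.exp (Complex.I * a * r * z * (starRingEnd ℂ) (p.1 + p.2 * I) / (r ^ 2 + 1)) *
      ((gaussianDensity a (p.1 + p.2 * I) : ℝ) : ℂ)
    = (((a / Real.pi) ^ ((1:ℝ) / 4) : ℝ) : ℂ) * ((a / (2 * Real.pi) : ℝ) : ℂ) *
        ∫ t : ℝ, g t * Complex.exp
          (Eexp a ((1 - r ^ 2) / (r ^ 2 + 1)) (I * (a:ℂ) * r * z / ((r:ℂ) ^ 2 + 1)) t p.1 p.2) := by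
  obtain ⟨x, y⟩ := p
  dsimp only
  have hconj : (starRingEnd ℂ) ((x:ℂ) + (y:ℂ) * I) = (x:ℂ) - (y:ℂ) * I := by
    rw [map_add, map_mul, Complex.conj_ofReal, Complex.conj_ofReal, Complex.conj_I]
    ring
  have habs : ‖((x:ℂ) + (y:ℂ) * I)‖ ^ 2 = x ^ 2 + y ^ 2 := by
    rw [Complex.sq_norm, Complex.normSq_add_mul_I]
  unfold bargmann gaussianDensity
  rw [hconj, habs]
  have hsplit : ∀ t : ℝ, g t * Complex.exp
        (Eexp a ((1 - r ^ 2) / (r ^ 2 + 1)) (I * (a:ℂ) * r * z / ((r:ℂ) ^ 2 + 1)) t x y)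
      = (g t * Complex.exp ((a:ℂ) * t * ((x:ℂ) + (y:ℂ) * I) - ((a:ℂ) / 2) * (t:ℂ) ^ 2
          - ((a:ℂ) / 4) * ((x:ℂ) + (y:ℂ) * I) ^ 2)) *
        (Complex.exp (((a:ℂ) / 4) * ((x:ℂ) - (y:ℂ) * I) ^ 2 * ((1 - (r:ℂ) ^ 2) / ((r:ℂ) ^ 2 + 1))) *
         (Complex.exp (I * (a:ℂ) * (r:ℂ) * z * ((x:ℂ) - (y:ℂ) * I) / ((r:ℂ) ^ 2 + 1)) *
          Complex.exp ((-(a / 2) * (x ^ 2 + y ^ 2) : ℝ)))) := by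
    intro t
    rw [← Complex.exp_add, ← Complex.exp_add, mul_assoc (g t : ℂ), ← Complex.exp_add]
    congr 2
    unfold Eexp
    push_cast
    ring
  conv_rhs => rw [show (∫ t : ℝ, g t * Complex.exp
      (Eexp a ((1 - r ^ 2) / (r ^ 2 + 1)) (I * (a:ℂ) * r * z / ((r:ℂ) ^ 2 + 1)) t x y))
      = (∫ t : ℝ, g t * Complex.exp ((a:ℂ) * t * ((x:ℂ) + (y:ℂ) * I) - ((a:ℂ) / 2) * (t:ℂ) ^ 2
          - ((a:ℂ) / 4) * ((x:ℂ) + (y:ℂ) * I) ^ 2)) *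
        (Complex.exp (((a:ℂ) / 4) * ((x:ℂ) - (y:ℂ) * I) ^ 2 * ((1 - (r:ℂ) ^ 2) / ((r:ℂ) ^ 2 + 1))) *
         (Complex.exp (I * (a:ℂ) * (r:ℂ) * z * ((x:ℂ) - (y:ℂ) * I) / ((r:ℂ) ^ 2 + 1)) *
          Complex.exp ((-(a / 2) * (x ^ 2 + y ^ 2) : ℝ)))) from by
    rw [← integral_mul_const]
    exact integral_congr_ae (Filter.Eventually.of_forall fun t => hsplit t)]
  push_cast
  ring

/-- For a Schwartz function `g` and `r > 0`, the Bargmann transform of `F_r g` is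
given by an integral over `ℂ` against the Gaussian measure `dλ_{a/2}`, and that
integral converges. -/
theorem bargmann_fourierR (a r : ℝ) (ha : 0 < a) (hr : 0 < r)
    (g : SchwartzMap ℝ ℂ) (z : ℂ) :
    MeasureTheory.Integrable
      (fun w : ℂ => bargmann a (fun x : ℝ => g x) w *
        Complex.exp ((a / 4) * (starRingEnd ℂ) w ^ 2 * ((1 - r ^ 2) / (r ^ 2 + 1))) *
        Complex.exp (Complex.I * a * r * z * (starRingEnd ℂ) w / (r ^ 2 + 1)) *
        (gaussianDensity a w : ℂ)) (volume : Measure ℂ) ∧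
    bargmann a (fourierR a r (fun x : ℝ => g x)) z =
      2 * (Real.sqrt (r / (r ^ 2 + 1)) : ℂ) *
        Complex.exp (-(a / 4) * z ^ 2 * ((r ^ 2 - 1) / (r ^ 2 + 1))) *
        ∫ w : ℂ, bargmann a (fun x : ℝ => g x) w *
          Complex.exp ((a / 4) * (starRingEnd ℂ) w ^ 2 * ((1 - r ^ 2) / (r ^ 2 + 1))) *
          Complex.exp (Complex.I * a * r * z * (starRingEnd ℂ) w / (r ^ 2 + 1)) *
          (gaussianDensity a w : ℂ) := by
  have hk : (0:ℝ) < r ^ 2 + 1 := by positivity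
  have hs1 : -1 < (1 - r ^ 2) / (r ^ 2 + 1) := by rw [lt_div_iff₀ hk]; nlinarith
  have hs2 : (1 - r ^ 2) / (r ^ 2 + 1) < 1 := by
    rw [div_lt_one hk]; nlinarith [mul_pos hr hr]
  have ha' : (a:ℂ) ≠ 0 := by exact_mod_cast ha.ne'
  have hkC : ((r:ℂ) ^ 2 + 1) ≠ 0 := by
    have h0 : ((r ^ 2 + 1 : ℝ):ℂ) ≠ 0 := by exact_mod_cast hk.ne'
    push_cast at h0; exact h0
  have h1s : (1:ℝ) + (1 - r ^ 2) / (r ^ 2 + 1) = 2 / (r ^ 2 + 1) := by field_simp; ring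
  have hInt2 := key_integrable a ((1 - r ^ 2) / (r ^ 2 + 1)) ha hs1 hs2
    (I * (a:ℂ) * r * z / ((r:ℂ) ^ 2 + 1)) g
  have hIntRR : Integrable (fun p : ℝ × ℝ =>
      bargmann a (fun x : ℝ => g x) (p.1 + p.2 * I) *
        Complex.exp ((a / 4) * (starRingEnd ℂ) (p.1 + p.2 * I) ^ 2 * ((1 - r ^ 2) / (r ^ 2 + 1))) *
        Complex.exp (Complex.I * a * r * z * (starRingEnd ℂ) (p.1 + p.2 * I) / (r ^ 2 + 1)) *
        (gaussianDensity a (p.1 + p.2 * I) : ℂ)) (volume : Measure (ℝ × ℝ)) := by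
    have h := (hInt2.integral_prod_left).const_mul
      ((((a / Real.pi) ^ ((1:ℝ) / 4) : ℝ) : ℂ) * ((a / (2 * Real.pi) : ℝ) : ℂ))
    exact h.congr (Filter.Eventually.of_forall fun p => (hGF a r g z p).symm)
  constructor
  · exact (bft_integrable_iff_comp _).2 hIntRR
  · rw [lhs_eval a r ha hr g z]
    have hRight : (∫ w : ℂ, bargmann a (fun x : ℝ => g x) w *
          Complex.exp ((a / 4) * (starRingEnd ℂ) w ^ 2 * ((1 - r ^ 2) / (r ^ 2 + 1))) *
          Complex.exp (Complex.I * a * r * z * (starRingEnd ℂ) w / (r ^ 2 + 1)) *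
          (gaussianDensity a w : ℂ))
        = (((a / Real.pi) ^ ((1:ℝ) / 4) : ℝ) : ℂ) * ((a / (2 * Real.pi) : ℝ) : ℂ) *
          ((Real.sqrt (Real.pi / ((a / 4) * (1 + (1 - r ^ 2) / (r ^ 2 + 1)))) *
              Real.sqrt (Real.pi / a) : ℝ) : ℂ) *
          ∫ t : ℝ, g t * Complex.exp ((a / 2) * (t:ℂ) ^ 2 -
            ((a:ℂ) * t - I * (a:ℂ) * r * z / ((r:ℂ) ^ 2 + 1)) ^ 2 /
              ((a:ℂ) * (1 + ((1 - r ^ 2) / (r ^ 2 + 1) : ℝ)))) := by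
      rw [bft_integral_comp]
      rw [integral_congr_ae (Filter.Eventually.of_forall fun p => hGF a r g z p)]
      rw [integral_const_mul]
      rw [integral_integral_swap (f := fun (p : ℝ × ℝ) (t : ℝ) => g t * Complex.exp
        (Eexp a ((1 - r ^ 2) / (r ^ 2 + 1)) (I * (a:ℂ) * r * z / ((r:ℂ) ^ 2 + 1)) t p.1 p.2))
        hInt2]
      simp_rw [integral_const_mul,
        W_eval a ((1 - r ^ 2) / (r ^ 2 + 1)) ha hs1 hs2 (I * (a:ℂ) * r * z / ((r:ℂ) ^ 2 + 1)),
        mul_left_comm]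
      rw [integral_const_mul]
      ring
    rw [hRight]
    have hζΨ : ∀ t : ℝ, Complex.exp (-(a / 4) * z ^ 2 * ((r ^ 2 - 1) / (r ^ 2 + 1))) *
        Complex.exp ((a / 2) * (t:ℂ) ^ 2 -
          ((a:ℂ) * t - I * (a:ℂ) * r * z / ((r:ℂ) ^ 2 + 1)) ^ 2 /
            ((a:ℂ) * (1 + ((1 - r ^ 2) / (r ^ 2 + 1) : ℝ))))
        = Complex.exp (((a / 4 : ℝ):ℂ) * z ^ 2 + I * (a:ℂ) * r * t * z
            - ((a / 2 : ℝ):ℂ) * r ^ 2 * (t:ℂ) ^ 2) := by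
      intro t
      rw [← Complex.exp_add]
      congr 1
      have hne : (a:ℂ) * (1 + ((1 - r ^ 2) / (r ^ 2 + 1) : ℝ)) ≠ 0 := by
        push_cast
        rw [show (1:ℂ) + (1 - (r:ℂ) ^ 2) / ((r:ℂ) ^ 2 + 1) = 2 / ((r:ℂ) ^ 2 + 1) by
          field_simp; ring]
        exact mul_ne_zero ha' (div_ne_zero two_ne_zero hkC)
      push_cast
      have hdiv : ((a:ℂ)*t - I*(a:ℂ)*r*z/((r:ℂ)^2+1))^2 /
            ((a:ℂ)*(1 + (1-(r:ℂ)^2)/((r:ℂ)^2+1)))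
          = ((a:ℂ)*t*((r:ℂ)^2+1) - I*(a:ℂ)*r*z)^2 / (2*(a:ℂ)*((r:ℂ)^2+1)) := by
        rw [show (1:ℂ) + (1-(r:ℂ)^2)/((r:ℂ)^2+1) = 2/((r:ℂ)^2+1) by field_simp; ring]
        rw [div_eq_div_iff (by
            exact mul_ne_zero ha' (div_ne_zero two_ne_zero hkC))
          (by exact mul_ne_zero (mul_ne_zero two_ne_zero ha') hkC)]
        field_simp [hkC]
      rw [hdiv]
      rw [div_eq_mul_inv _ (2*(a:ℂ)*((r:ℂ)^2+1)), div_eq_mul_inv _ ((r:ℂ)^2+1)]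
      have hu : 2*(a:ℂ)*((r:ℂ)^2+1) * (2*(a:ℂ)*((r:ℂ)^2+1))⁻¹ = 1 :=
        mul_inv_cancel₀ (mul_ne_zero (mul_ne_zero two_ne_zero ha') hkC)
      set u : ℂ := (2*(a:ℂ)*((r:ℂ)^2+1))⁻¹ with hu_def
      have hv : ((r:ℂ)^2+1)⁻¹ = 2*(a:ℂ)*u := by
        rw [hu_def, mul_inv, mul_inv]
        field_simp
      rw [hv]
      linear_combination (-(a:ℂ)^2*(r:ℂ)^2*z^2*u) * Complex.I_sq +
        ((a:ℂ)/4*z^2 + I*(a:ℂ)*r*(t:ℂ)*z - (a:ℂ)/2*(t:ℂ)^2*((r:ℂ)^2+1)) * hu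
    have hzint : Complex.exp (-(a / 4) * z ^ 2 * ((r ^ 2 - 1) / (r ^ 2 + 1))) *
        ∫ t : ℝ, g t * Complex.exp ((a / 2) * (t:ℂ) ^ 2 -
          ((a:ℂ) * t - I * (a:ℂ) * r * z / ((r:ℂ) ^ 2 + 1)) ^ 2 /
            ((a:ℂ) * (1 + ((1 - r ^ 2) / (r ^ 2 + 1) : ℝ))))
        = ∫ t : ℝ, g t * Complex.exp (((a / 4 : ℝ):ℂ) * z ^ 2 + I * (a:ℂ) * r * t * z
            - ((a / 2 : ℝ):ℂ) * r ^ 2 * (t:ℂ) ^ 2) := by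
      rw [← integral_const_mul]
      refine integral_congr_ae (Filter.Eventually.of_forall fun t => ?_)
      show Complex.exp (-(a / 4) * z ^ 2 * ((r ^ 2 - 1) / (r ^ 2 + 1))) *
        (g t * Complex.exp ((a / 2) * (t:ℂ) ^ 2 -
          ((a:ℂ) * t - I * (a:ℂ) * r * z / ((r:ℂ) ^ 2 + 1)) ^ 2 /
            ((a:ℂ) * (1 + ((1 - r ^ 2) / (r ^ 2 + 1) : ℝ))))) = _
      rw [mul_left_comm, hζΨ t]
    rw [← hzint]
    -- constants
    have e1 : Real.sqrt (a * r / Real.pi) * Real.sqrt (Real.pi / (a / 2))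
        = Real.sqrt (2 * r) := by
      rw [← Real.sqrt_mul (by positivity)]
      congr 1
      field_simp
    have e2 : 2 * Real.sqrt (r / (r ^ 2 + 1)) * ((a / (2 * Real.pi)) *
        (Real.sqrt (Real.pi / ((a / 4) * (1 + (1 - r ^ 2) / (r ^ 2 + 1)))) *
          Real.sqrt (Real.pi / a))) = Real.sqrt (2 * r) := by
      rw [h1s]
      have h4 : Real.sqrt (4:ℝ) = 2 := by
        rw [show (4:ℝ) = 2 ^ 2 by norm_num, Real.sqrt_sq (by norm_num)]
      calc 2 * Real.sqrt (r / (r ^ 2 + 1)) * ((a / (2 * Real.pi)) *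
            (Real.sqrt (Real.pi / ((a / 4) * (2 / (r ^ 2 + 1)))) * Real.sqrt (Real.pi / a)))
          = Real.sqrt 4 * (Real.sqrt (r / (r ^ 2 + 1)) * (Real.sqrt ((a / (2 * Real.pi)) ^ 2) *
            (Real.sqrt (Real.pi / ((a / 4) * (2 / (r ^ 2 + 1)))) * Real.sqrt (Real.pi / a)))) := by
            rw [h4, Real.sqrt_sq (by positivity)]; ring
        _ = Real.sqrt (4 * ((r / (r ^ 2 + 1)) * ((a / (2 * Real.pi)) ^ 2 *
            ((Real.pi / ((a / 4) * (2 / (r ^ 2 + 1)))) * (Real.pi / a))))) := by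
            rw [← Real.sqrt_mul (by positivity) (Real.pi / a),
              ← Real.sqrt_mul (by positivity), ← Real.sqrt_mul (by positivity),
              ← Real.sqrt_mul (by norm_num)]
        _ = Real.sqrt (2 * r) := by
            congr 1
            field_simp
            ring
    have hrealconst : (a / Real.pi) ^ ((1:ℝ) / 4) *
        (Real.sqrt (a * r / Real.pi) * Real.sqrt (Real.pi / (a / 2)))
        = 2 * Real.sqrt (r / (r ^ 2 + 1)) * ((a / Real.pi) ^ ((1:ℝ) / 4) * (a / (2 * Real.pi)) *
          (Real.sqrt (Real.pi / ((a / 4) * (1 + (1 - r ^ 2) / (r ^ 2 + 1)))) *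
            Real.sqrt (Real.pi / a))) := by
      rw [e1]
      calc (a / Real.pi) ^ ((1:ℝ) / 4) * Real.sqrt (2 * r)
          = (a / Real.pi) ^ ((1:ℝ) / 4) * (2 * Real.sqrt (r / (r ^ 2 + 1)) *
            ((a / (2 * Real.pi)) *
            (Real.sqrt (Real.pi / ((a / 4) * (1 + (1 - r ^ 2) / (r ^ 2 + 1)))) *
              Real.sqrt (Real.pi / a)))) := by rw [e2]
        _ = _ := by ring
    have hconst : ((( a / Real.pi) ^ ((1:ℝ) / 4) *
          (Real.sqrt (a * r / Real.pi) * Real.sqrt (Real.pi / (a / 2))) : ℝ) : ℂ)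
        = 2 * (Real.sqrt (r / (r ^ 2 + 1)) : ℂ) *
          ((((a / Real.pi) ^ ((1:ℝ) / 4) : ℝ) : ℂ) * ((a / (2 * Real.pi) : ℝ) : ℂ) *
          ((Real.sqrt (Real.pi / ((a / 4) * (1 + (1 - r ^ 2) / (r ^ 2 + 1)))) *
              Real.sqrt (Real.pi / a) : ℝ) : ℂ)) := by
      exact_mod_cast congrArg (fun u : ℝ => (u : ℂ)) hrealconst
    calc (((a / Real.pi) ^ ((1:ℝ) / 4) *
          (Real.sqrt (a * r / Real.pi) * Real.sqrt (Real.pi / (a / 2))) : ℝ) : ℂ) *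
          (Complex.exp (-(a / 4) * z ^ 2 * ((r ^ 2 - 1) / (r ^ 2 + 1))) *
           ∫ t : ℝ, g t * Complex.exp ((a / 2) * (t:ℂ) ^ 2 -
            ((a:ℂ) * t - I * (a:ℂ) * r * z / ((r:ℂ) ^ 2 + 1)) ^ 2 /
              ((a:ℂ) * (1 + ((1 - r ^ 2) / (r ^ 2 + 1) : ℝ)))))
        = (2 * (Real.sqrt (r / (r ^ 2 + 1)) : ℂ) *
          ((((a / Real.pi) ^ ((1:ℝ) / 4) : ℝ) : ℂ) * ((a / (2 * Real.pi) : ℝ) : ℂ) *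
          ((Real.sqrt (Real.pi / ((a / 4) * (1 + (1 - r ^ 2) / (r ^ 2 + 1)))) *
              Real.sqrt (Real.pi / a) : ℝ) : ℂ))) *
          (Complex.exp (-(a / 4) * z ^ 2 * ((r ^ 2 - 1) / (r ^ 2 + 1))) *
           ∫ t : ℝ, g t * Complex.exp ((a / 2) * (t:ℂ) ^ 2 -
            ((a:ℂ) * t - I * (a:ℂ) * r * z / ((r:ℂ) ^ 2 + 1)) ^ 2 /
              ((a:ℂ) * (1 + ((1 - r ^ 2) / (r ^ 2 + 1) : ℝ))))) := by rw [hconst]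
      _ = _ := by ring
end

section
/- Let a > 0, r > 0 and let g : ℝ → ℂ be a Schwartz function. Define the dilation (h_r g)(x) = g(r x). Then for every z ∈ ℂ, [B_{a/2}(h_r g)](z) = √( 2/(r²+1) ) · e^{−(a/4)·z²·(r²−1)/(r²+1)} · ∫_ℂ (B_{a/2}g)(−i w) · e^{(a/4)·conj(w)²·(1−r²)/(r²+1)} · e^{i a r z conj(w)/(r²+1)} dλ_{a/2}(w), and the integral over ℂ converges. -/
open Complex Real SchwartzMap MeasureTheory

namespace BDA

lemma hI2 : (I : ℂ) ^ 2 = -1 := Complex.I_sq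
lemma hI3 : (I : ℂ) ^ 3 = -I := by rw [pow_succ, hI2]; ring
lemma hI4 : (I : ℂ) ^ 4 = 1 := by rw [pow_succ, hI3, neg_mul, ← sq, hI2, neg_neg]

lemma aux_integrable_exp_quad {b : ℝ} (hb : b < 0) (c : ℝ) :
    Integrable (fun x : ℝ => Real.exp (b * x ^ 2 + c * x)) := by
  have h := (integrable_cexp_quadratic' (b := (b : ℂ)) (by simpa using hb) (c : ℂ) 0).norm
  refine h.congr (Filter.Eventually.of_forall fun x => ?_)
  show ‖cexp _‖ = _
  rw [Complex.norm_exp]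
  congr 1
  simp only [← Complex.ofReal_pow, ← Complex.ofReal_mul, ← Complex.ofReal_add, add_zero,
    Complex.ofReal_re]

lemma aux_integrable_exp_quad_abs {b : ℝ} (hb : b < 0) (c : ℝ) :
    Integrable (fun x : ℝ => Real.exp (b * x ^ 2 + c * |x|)) := by
  have h1 := aux_integrable_exp_quad hb c
  have h2 := aux_integrable_exp_quad hb (-c)
  refine (h1.add h2).mono' ?_ ?_
  · exact (Real.continuous_exp.comp (by fun_prop)).aestronglyMeasurable
  · filter_upwards with x
    rcases abs_cases x with ⟨h, _⟩ | ⟨h, _⟩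
    · rw [Real.norm_eq_abs, _root_.abs_of_nonneg (Real.exp_pos _).le, h]
      exact le_add_of_nonneg_right (Real.exp_pos _).le
    · rw [Real.norm_eq_abs, _root_.abs_of_nonneg (Real.exp_pos _).le, h]
      have : b * x ^ 2 + c * -x = b * x ^ 2 + -c * x := by ring
      rw [this]
      exact le_add_of_nonneg_left (Real.exp_pos _).le

lemma aux_schwartz_bound (g : SchwartzMap ℝ ℂ) :
    ∃ C : ℝ, 0 ≤ C ∧ ∀ t : ℝ, ‖g t‖ ≤ C * (1 + t ^ 2)⁻¹ := by
  obtain ⟨C0, hC0pos, hC0⟩ := g.decay 0 0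
  obtain ⟨C2, hC2pos, hC2⟩ := g.decay 2 0
  refine ⟨C0 + C2, by positivity, fun t => ?_⟩
  rw [← div_eq_mul_inv, le_div_iff₀ (by positivity)]
  have h0 := hC0 t
  have h2 := hC2 t
  simp only [pow_zero, one_mul, norm_iteratedFDeriv_zero, Real.norm_eq_abs] at h0 h2
  have ht : |t| ^ 2 = t ^ 2 := sq_abs t
  nlinarith [norm_nonneg (g t)]

/-- `β = I a r z/(r²+1)`. -/
noncomputable def bet (a r : ℝ) (z : ℂ) : ℂ := I * ((a * r : ℝ) : ℂ) * z / ((r ^ 2 + 1 : ℝ) : ℂ)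

/-- Full exponent of the triple integrand, as a function of `t x y`. -/
noncomputable def E (a r : ℝ) (z : ℂ) (t x y : ℝ) : ℂ :=
  ((a * t : ℝ) : ℂ) * (-I * ((x : ℂ) + (y : ℂ) * I)) - ((a / 2 * t ^ 2 : ℝ) : ℂ)
    + ((a / 4 : ℝ) : ℂ) * ((x : ℂ) + (y : ℂ) * I) ^ 2
    + ((a / 4 : ℝ) : ℂ) * ((1 - r ^ 2 : ℝ) : ℂ) * ((x : ℂ) - (y : ℂ) * I) ^ 2 / ((r ^ 2 + 1 : ℝ) : ℂ)
    + bet a r z * ((x : ℂ) - (y : ℂ) * I)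
    - ((a / 2 * (x ^ 2 + y ^ 2) : ℝ) : ℂ)

noncomputable def byR (a r : ℝ) : ℝ := -(a * (r ^ 2 + 2)) / (2 * (r ^ 2 + 1))
noncomputable def cy (a r : ℝ) (z : ℂ) (t x : ℝ) : ℂ :=
  ((a * t : ℝ) : ℂ) + I * ((a * r ^ 2 : ℝ) : ℂ) * (x : ℂ) / ((r ^ 2 + 1 : ℝ) : ℂ)
    + ((a * r : ℝ) : ℂ) * z / ((r ^ 2 + 1 : ℝ) : ℂ)
noncomputable def dy (a r : ℝ) (z : ℂ) (t x : ℝ) : ℂ :=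
  -(I * ((a * t : ℝ) : ℂ) * (x : ℂ)) - ((a / 2 * t ^ 2 : ℝ) : ℂ)
    - ((a * r ^ 2 / 2 : ℝ) : ℂ) * (x : ℂ) ^ 2 / ((r ^ 2 + 1 : ℝ) : ℂ)
    + I * ((a * r : ℝ) : ℂ) * z * (x : ℂ) / ((r ^ 2 + 1 : ℝ) : ℂ)
noncomputable def bxR (a r : ℝ) : ℝ := -(a * r ^ 2) / (r ^ 2 + 2)
noncomputable def cx (a r : ℝ) (z : ℂ) (t : ℝ) : ℂ :=
  2 * I * (a : ℂ) * ((r : ℂ) * z - (t : ℂ)) / ((r ^ 2 + 2 : ℝ) : ℂ)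
noncomputable def dx (a r : ℝ) (z : ℂ) (t : ℝ) : ℂ :=
  ((a / 2 : ℝ) : ℂ) * ((r ^ 2 + 1 : ℝ) : ℂ) * (t : ℂ) ^ 2 / ((r ^ 2 + 2 : ℝ) : ℂ)
    - ((a / 2 * t ^ 2 : ℝ) : ℂ)
    + ((a * r : ℝ) : ℂ) * z * (t : ℂ) / ((r ^ 2 + 2 : ℝ) : ℂ)
    + ((a * r ^ 2 / 2 : ℝ) : ℂ) * z ^ 2 / ((r ^ 2 + 1 : ℝ) : ℂ) / ((r ^ 2 + 2 : ℝ) : ℂ)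
noncomputable def Qf (a r : ℝ) (z : ℂ) (t : ℝ) : ℂ :=
  -(((a / 2 : ℝ) : ℂ) * (t : ℂ) ^ 2 / (r : ℂ) / (r : ℂ)) + (a : ℂ) * z * (t : ℂ) / (r : ℂ)
    - (a : ℂ) * z ^ 2 / 2 / ((r ^ 2 + 1 : ℝ) : ℂ)

lemma byR_cast (a r : ℝ) : ((byR a r : ℝ) : ℂ) =
    -((a : ℂ) * ((r ^ 2 + 2 : ℝ) : ℂ)) / 2 / ((r ^ 2 + 1 : ℝ) : ℂ) := by
  rw [byR, Complex.ofReal_div, Complex.ofReal_neg, Complex.ofReal_mul, Complex.ofReal_mul,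
    Complex.ofReal_ofNat, div_div]

lemma bxR_cast (a r : ℝ) : ((bxR a r : ℝ) : ℂ) =
    -((a : ℂ) * (r : ℂ) ^ 2) / ((r ^ 2 + 2 : ℝ) : ℂ) := by
  rw [bxR, Complex.ofReal_div, Complex.ofReal_neg, Complex.ofReal_mul, Complex.ofReal_pow]

lemma byR_div (a r : ℝ) (X : ℂ) : X / (4 * ((byR a r : ℝ) : ℂ)) =
    -(X * ((r ^ 2 + 1 : ℝ) : ℂ) / 2 / (a : ℂ) / ((r ^ 2 + 2 : ℝ) : ℂ)) := by
  rw [byR_cast]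
  rw [show (4 : ℂ) * (-((a : ℂ) * ((r ^ 2 + 2 : ℝ) : ℂ)) / 2 / ((r ^ 2 + 1 : ℝ) : ℂ)) =
      -(2 * ((a : ℂ) * ((r ^ 2 + 2 : ℝ) : ℂ))) / ((r ^ 2 + 1 : ℝ) : ℂ) from by ring,
    div_div_eq_mul_div]
  ring

lemma bxR_div (a r : ℝ) (X : ℂ) : X / (4 * ((bxR a r : ℝ) : ℂ)) =
    -(X * ((r ^ 2 + 2 : ℝ) : ℂ) / 4 / (a : ℂ) / (r : ℂ) / (r : ℂ)) := by
  rw [bxR_cast]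
  rw [show (4 : ℂ) * (-((a : ℂ) * (r : ℂ) ^ 2) / ((r ^ 2 + 2 : ℝ) : ℂ)) =
      -(4 * ((a : ℂ) * (r : ℂ) ^ 2)) / ((r ^ 2 + 2 : ℝ) : ℂ) from by ring,
    div_div_eq_mul_div]
  ring

lemma sq_add_mul_I (x y : ℝ) :
    ((x : ℂ) + (y : ℂ) * I) ^ 2 = ((x ^ 2 - y ^ 2 : ℝ) : ℂ) + ((2 * x * y : ℝ) : ℂ) * I := by
  push_cast
  linear_combination (y : ℂ) ^ 2 * Complex.I_sq

lemma sq_sub_mul_I (x y : ℝ) :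
    ((x : ℂ) - (y : ℂ) * I) ^ 2 = ((x ^ 2 - y ^ 2 : ℝ) : ℂ) - ((2 * x * y : ℝ) : ℂ) * I := by
  push_cast
  linear_combination (y : ℂ) ^ 2 * Complex.I_sq

lemma lin_mul_I (c x y : ℝ) :
    ((c : ℝ) : ℂ) * (-I * ((x : ℂ) + (y : ℂ) * I)) = ((c * y : ℝ) : ℂ) + ((-(c * x) : ℝ) : ℂ) * I := by
  push_cast
  linear_combination (-(c : ℂ) * (y : ℂ)) * Complex.I_sq

lemma E_re (a r : ℝ) (z : ℂ) (t x y : ℝ) :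
    (E a r z t x y).re =
      a * t * y - a / 2 * t ^ 2
        + (a / 4 + a / 4 * ((1 - r ^ 2) / (r ^ 2 + 1)) - a / 2) * x ^ 2
        + (-(a / 4) - a / 4 * ((1 - r ^ 2) / (r ^ 2 + 1)) - a / 2) * y ^ 2
        + (bet a r z).re * x + (bet a r z).im * y := by
  have hdiv : ∀ w : ℂ, w / ((r ^ 2 + 1 : ℝ) : ℂ) = w * ((((r ^ 2 + 1)⁻¹ : ℝ)) : ℂ) := fun w => by
    rw [Complex.ofReal_inv]; exact div_eq_mul_inv w _
  rw [E, lin_mul_I (a * t) x y, sq_add_mul_I, sq_sub_mul_I, hdiv]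
  simp only [Complex.add_re, Complex.sub_re, Complex.mul_re, Complex.mul_im, Complex.add_im,
    Complex.sub_im, Complex.ofReal_re, Complex.ofReal_im, Complex.I_re, Complex.I_im]
  ring

set_option maxHeartbeats 1000000 in
lemma hS1 (a r : ℝ) (z : ℂ) (t x y : ℝ) :
    E a r z t x y = ((byR a r : ℝ) : ℂ) * (y : ℂ) ^ 2 + cy a r z t x * (y : ℂ) + dy a r z t x := by
  rw [E, bet, cy, dy, byR_cast]
  simp only [div_eq_mul_inv]
  generalize hU1 : (((r ^ 2 + 1 : ℝ) : ℂ))⁻¹ = u1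
  have hrel1 : ((r : ℂ) ^ 2 + 1) * u1 = 1 := by
    rw [← hU1, show ((r : ℂ) ^ 2 + 1) = ((r ^ 2 + 1 : ℝ) : ℂ) from by push_cast; ring]
    exact mul_inv_cancel₀ (Complex.ofReal_ne_zero.2 (by positivity))
  push_cast
  linear_combination ((1/2)*(a:ℂ)*(y:ℂ)^2 + (-1/4)*(a:ℂ)*(y:ℂ)^2*I^2 + (-1/2)*(a:ℂ)*(x:ℂ)*(y:ℂ)*I + (1/4)*(a:ℂ)*(x:ℂ)^2 + (1)*(a:ℂ)*(t:ℂ)*(y:ℂ) + (1)*(a:ℂ)*(t:ℂ)*(y:ℂ)*I^2) * hrel1 + ((1/2)*(a:ℂ)*(y:ℂ)^2*u1 + (-1)*(a:ℂ)*(t:ℂ)*(y:ℂ)*u1 + (-1)*(a:ℂ)*(r:ℂ)*(y:ℂ)*z*u1 + (-1)*(a:ℂ)*(r:ℂ)^2*(t:ℂ)*(y:ℂ)*u1) * Complex.I_sq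

set_option maxHeartbeats 1000000 in
lemma hS2 {a r : ℝ} (ha : 0 < a) (hr : 0 < r) (z : ℂ) (t x : ℝ) :
    dy a r z t x - (cy a r z t x) ^ 2 / (4 * ((byR a r : ℝ) : ℂ)) =
      ((bxR a r : ℝ) : ℂ) * (x : ℂ) ^ 2 + cx a r z t * (x : ℂ) + dx a r z t := by
  rw [byR_div, cy, dy, bxR_cast, cx, dx]
  simp only [div_eq_mul_inv]
  generalize hU1 : (((r ^ 2 + 1 : ℝ) : ℂ))⁻¹ = u1
  generalize hU2 : (((r ^ 2 + 2 : ℝ) : ℂ))⁻¹ = u2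
  generalize hU3 : ((a : ℂ))⁻¹ = u3
  have hrel1 : ((r : ℂ) ^ 2 + 1) * u1 = 1 := by
    rw [← hU1, show ((r : ℂ) ^ 2 + 1) = ((r ^ 2 + 1 : ℝ) : ℂ) from by push_cast; ring]
    exact mul_inv_cancel₀ (Complex.ofReal_ne_zero.2 (by positivity))
  have hrel2 : ((r : ℂ) ^ 2 + 2) * u2 = 1 := by
    rw [← hU2, show ((r : ℂ) ^ 2 + 2) = ((r ^ 2 + 2 : ℝ) : ℂ) from by push_cast; ring]
    exact mul_inv_cancel₀ (Complex.ofReal_ne_zero.2 (by positivity))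
  have hrel3 : (a : ℂ) * u3 = 1 := by
    rw [← hU3]; exact mul_inv_cancel₀ (Complex.ofReal_ne_zero.2 ha.ne')
  push_cast
  linear_combination ((1)*(a:ℂ)*(t:ℂ)*(x:ℂ)*I + (-2)*(a:ℂ)*(t:ℂ)*(x:ℂ)*I*u2 + (1)*(a:ℂ)*(t:ℂ)*(x:ℂ)*I*u1 + (-2)*(a:ℂ)*(t:ℂ)*(x:ℂ)*I*u1*u2 + (1/2)*(a:ℂ)*(t:ℂ)^2*u2 + (1/2)*(a:ℂ)*(t:ℂ)^2*u1*u2 + (2)*(a:ℂ)*(r:ℂ)*(x:ℂ)*z*I*u2 + (-1)*(a:ℂ)*(r:ℂ)*(x:ℂ)*z*I*u1 + (2)*(a:ℂ)*(r:ℂ)*(x:ℂ)*z*I*u1*u2 + (1)*(a:ℂ)*(r:ℂ)*(t:ℂ)*z*u2 + (1)*(a:ℂ)*(r:ℂ)*(t:ℂ)*z*u1*u2 + (1/2)*(a:ℂ)*(r:ℂ)^2*z^2*u1*u2 + (-1)*(a:ℂ)*(r:ℂ)^2*(x:ℂ)^2*u2 + (1/2)*(a:ℂ)*(r:ℂ)^2*(x:ℂ)^2*u1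 + (-1)*(a:ℂ)*(r:ℂ)^2*(x:ℂ)^2*u1*u2 + (1)*(a:ℂ)*(r:ℂ)^2*(t:ℂ)*(x:ℂ)*I*u1 + (-2)*(a:ℂ)*(r:ℂ)^2*(t:ℂ)*(x:ℂ)*I*u1*u2 + (1/2)*(a:ℂ)*(r:ℂ)^2*(t:ℂ)^2*u2 + (1)*(a:ℂ)*(r:ℂ)^2*(t:ℂ)^2*u1*u2 + (2)*(a:ℂ)*(r:ℂ)^3*(x:ℂ)*z*I*u1*u2 + (1)*(a:ℂ)*(r:ℂ)^3*(t:ℂ)*z*u1*u2 + (-1)*(a:ℂ)*(r:ℂ)^4*(x:ℂ)^2*u1*u2 + (1/2)*(a:ℂ)*(r:ℂ)^4*(t:ℂ)^2*u1*u2 + (-1/2)*(a:ℂ)^2*(t:ℂ)^2*u2*u3 + (-1/2)*(a:ℂ)^2*(t:ℂ)^2*u1*u2*u3 + (-1)*(a:ℂ)^2*(r:ℂ)*(t:ℂ)*z*u1*u2*u3 + (-1)*(a:ℂ)^2*(r:ℂ)^2*(t:ℂ)*(x:ℂ)*I*u1*u2*u3 + (-1/2)*(a:ℂ)^2*(r:ℂ)^2*(t:ℂ)^2*u2*u3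 + (-1)*(a:ℂ)^2*(r:ℂ)^2*(t:ℂ)^2*u1*u2*u3 + (-1)*(a:ℂ)^2*(r:ℂ)^3*(t:ℂ)*z*u1*u2*u3 + (-1)*(a:ℂ)^2*(r:ℂ)^4*(t:ℂ)*(x:ℂ)*I*u1*u2*u3 + (-1/2)*(a:ℂ)^2*(r:ℂ)^4*(t:ℂ)^2*u1*u2*u3) * hrel1 + ((1)*(a:ℂ)*(t:ℂ)*(x:ℂ)*I*u1^2 + (-1)*(a:ℂ)*(r:ℂ)*(x:ℂ)*z*I*u1^2 + (1/2)*(a:ℂ)*(r:ℂ)^2*(x:ℂ)^2*u1^2 + (2)*(a:ℂ)*(r:ℂ)^2*(t:ℂ)*(x:ℂ)*I*u1^2 + (-1)*(a:ℂ)*(r:ℂ)^3*(x:ℂ)*z*I*u1^2 + (1/2)*(a:ℂ)*(r:ℂ)^4*(x:ℂ)^2*u1^2 + (1)*(a:ℂ)*(r:ℂ)^4*(t:ℂ)*(x:ℂ)*I*u1^2) * hrel2 + ((1/2)*(a:ℂ)*(t:ℂ)^2*u1^2*u2 + (1)*(a:ℂ)*(r:ℂ)*(t:ℂ)*z*u1^2*u2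 + (1/2)*(a:ℂ)*(r:ℂ)^2*z^2*u1^2*u2 + (1)*(a:ℂ)*(r:ℂ)^2*(t:ℂ)*(x:ℂ)*I*u1^2*u2 + (3/2)*(a:ℂ)*(r:ℂ)^2*(t:ℂ)^2*u1^2*u2 + (1)*(a:ℂ)*(r:ℂ)^3*(x:ℂ)*z*I*u1^2*u2 + (2)*(a:ℂ)*(r:ℂ)^3*(t:ℂ)*z*u1^2*u2 + (1/2)*(a:ℂ)*(r:ℂ)^4*z^2*u1^2*u2 + (-1/2)*(a:ℂ)*(r:ℂ)^4*(x:ℂ)^2*u1^2*u2 + (2)*(a:ℂ)*(r:ℂ)^4*(t:ℂ)*(x:ℂ)*I*u1^2*u2 + (3/2)*(a:ℂ)*(r:ℂ)^4*(t:ℂ)^2*u1^2*u2 + (1)*(a:ℂ)*(r:ℂ)^5*(x:ℂ)*z*I*u1^2*u2 + (1)*(a:ℂ)*(r:ℂ)^5*(t:ℂ)*z*u1^2*u2 + (-1/2)*(a:ℂ)*(r:ℂ)^6*(x:ℂ)^2*u1^2*u2 + (1)*(a:ℂ)*(r:ℂ)^6*(t:ℂ)*(x:ℂ)*I*u1^2*u2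 + (1/2)*(a:ℂ)*(r:ℂ)^6*(t:ℂ)^2*u1^2*u2) * hrel3 + ((1/2)*(a:ℂ)^2*(r:ℂ)^4*(x:ℂ)^2*u1^2*u2*u3 + (1/2)*(a:ℂ)^2*(r:ℂ)^6*(x:ℂ)^2*u1^2*u2*u3) * Complex.I_sq

set_option maxHeartbeats 1000000 in
lemma hS4 {a r : ℝ} (ha : 0 < a) (hr : 0 < r) (z : ℂ) (t : ℝ) :
    dx a r z t - (cx a r z t) ^ 2 / (4 * ((bxR a r : ℝ) : ℂ)) = Qf a r z t := by
  rw [bxR_div, cx, dx, Qf]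
  simp only [div_eq_mul_inv]
  generalize hU1 : (((r ^ 2 + 1 : ℝ) : ℂ))⁻¹ = u1
  generalize hU2 : (((r ^ 2 + 2 : ℝ) : ℂ))⁻¹ = u2
  generalize hU3 : ((a : ℂ))⁻¹ = u3
  generalize hU4 : ((r : ℂ))⁻¹ = u4
  have hrel1 : ((r : ℂ) ^ 2 + 1) * u1 = 1 := by
    rw [← hU1, show ((r : ℂ) ^ 2 + 1) = ((r ^ 2 + 1 : ℝ) : ℂ) from by push_cast; ring]
    exact mul_inv_cancel₀ (Complex.ofReal_ne_zero.2 (by positivity))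
  have hrel2 : ((r : ℂ) ^ 2 + 2) * u2 = 1 := by
    rw [← hU2, show ((r : ℂ) ^ 2 + 2) = ((r ^ 2 + 2 : ℝ) : ℂ) from by push_cast; ring]
    exact mul_inv_cancel₀ (Complex.ofReal_ne_zero.2 (by positivity))
  have hrel3 : (a : ℂ) * u3 = 1 := by
    rw [← hU3]; exact mul_inv_cancel₀ (Complex.ofReal_ne_zero.2 ha.ne')
  have hrel4 : (r : ℂ) * u4 = 1 := by
    rw [← hU4]; exact mul_inv_cancel₀ (Complex.ofReal_ne_zero.2 hr.ne')
  push_cast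
  linear_combination ((1)*(a:ℂ)*(t:ℂ)*z*u4 + (1/2)*(a:ℂ)*(t:ℂ)^2 + (-1/2)*(a:ℂ)*(t:ℂ)^2*u4^2 + (-1/2)*(a:ℂ)*(t:ℂ)^2*u2 + (-1)*(a:ℂ)*(r:ℂ)*(t:ℂ)*z*u2 + (-1/2)*(a:ℂ)*(r:ℂ)^2*(t:ℂ)^2*u2 + (-2)*(a:ℂ)^2*(t:ℂ)^2*I^2*u2^2*u3*u4^2 + (4)*(a:ℂ)^2*(r:ℂ)*(t:ℂ)*z*I^2*u2^2*u3*u4^2 + (-2)*(a:ℂ)^2*(r:ℂ)^2*z^2*I^2*u2^2*u3*u4^2 + (-1)*(a:ℂ)^2*(r:ℂ)^2*(t:ℂ)^2*I^2*u2^2*u3*u4^2 + (2)*(a:ℂ)^2*(r:ℂ)^3*(t:ℂ)*z*I^2*u2^2*u3*u4^2 + (-1)*(a:ℂ)^2*(r:ℂ)^4*z^2*I^2*u2^2*u3*u4^2) * hrel1 + ((-1/2)*(a:ℂ)*z^2*u1 + (-1)*(a:ℂ)*z^2*u1*u2 + (1)*(a:ℂ)*(t:ℂ)*z*u1*u4 +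 (2)*(a:ℂ)*(t:ℂ)*z*u1*u2*u4 + (1/2)*(a:ℂ)*(t:ℂ)^2*u1 + (-1/2)*(a:ℂ)*(t:ℂ)^2*u1*u4^2 + (1/2)*(a:ℂ)*(t:ℂ)^2*u1*u2 + (-1)*(a:ℂ)*(t:ℂ)^2*u1*u2*u4^2 + (-1)*(a:ℂ)*(r:ℂ)*(t:ℂ)*z*u1*u2 + (-1)*(a:ℂ)*(r:ℂ)^2*z^2*u1*u2 + (1)*(a:ℂ)*(r:ℂ)^2*(t:ℂ)*z*u1*u4 + (3)*(a:ℂ)*(r:ℂ)^2*(t:ℂ)*z*u1*u2*u4 + (1/2)*(a:ℂ)*(r:ℂ)^2*(t:ℂ)^2*u1 + (-1/2)*(a:ℂ)*(r:ℂ)^2*(t:ℂ)^2*u1*u4^2 + (1/2)*(a:ℂ)*(r:ℂ)^2*(t:ℂ)^2*u1*u2 + (-3/2)*(a:ℂ)*(r:ℂ)^2*(t:ℂ)^2*u1*u2*u4^2 + (-1)*(a:ℂ)*(r:ℂ)^3*(t:ℂ)*z*u1*u2 + (1)*(a:ℂ)*(r:ℂ)^4*(t:ℂ)*z*u1*u2*u4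 + (-1/2)*(a:ℂ)*(r:ℂ)^4*(t:ℂ)^2*u1*u2*u4^2) * hrel2 + ((-2)*(a:ℂ)*z^2*u1*u2^2 + (4)*(a:ℂ)*(t:ℂ)*z*u1*u2^2*u4 + (1)*(a:ℂ)*(t:ℂ)^2*u1*u2^2 + (-2)*(a:ℂ)*(t:ℂ)^2*u1*u2^2*u4^2 + (-2)*(a:ℂ)*(r:ℂ)*(t:ℂ)*z*u1*u2^2 + (-3)*(a:ℂ)*(r:ℂ)^2*z^2*u1*u2^2 + (8)*(a:ℂ)*(r:ℂ)^2*(t:ℂ)*z*u1*u2^2*u4 + (3/2)*(a:ℂ)*(r:ℂ)^2*(t:ℂ)^2*u1*u2^2 + (-4)*(a:ℂ)*(r:ℂ)^2*(t:ℂ)^2*u1*u2^2*u4^2 + (-3)*(a:ℂ)*(r:ℂ)^3*(t:ℂ)*z*u1*u2^2 + (-1)*(a:ℂ)*(r:ℂ)^4*z^2*u1*u2^2 + (5)*(a:ℂ)*(r:ℂ)^4*(t:ℂ)*z*u1*u2^2*u4 + (1/2)*(a:ℂ)*(r:ℂ)^4*(t:ℂ)^2*u1*u2^2 + (-5/2)*(a:ℂ)*(r:ℂ)^4*(t:ℂ)^2*u1*u2^2*u4^2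 + (-1)*(a:ℂ)*(r:ℂ)^5*(t:ℂ)*z*u1*u2^2 + (1)*(a:ℂ)*(r:ℂ)^6*(t:ℂ)*z*u1*u2^2*u4 + (-1/2)*(a:ℂ)*(r:ℂ)^6*(t:ℂ)^2*u1*u2^2*u4^2) * hrel3 + ((-2)*(a:ℂ)^2*z^2*u1*u2^2*u3 + (4)*(a:ℂ)^2*(t:ℂ)*z*u1*u2^2*u3*u4 + (1)*(a:ℂ)^2*(t:ℂ)^2*u1*u2^2*u3 + (-2)*(a:ℂ)^2*(r:ℂ)*z^2*u1*u2^2*u3*u4 + (-2)*(a:ℂ)^2*(r:ℂ)*(t:ℂ)*z*u1*u2^2*u3 + (1)*(a:ℂ)^2*(r:ℂ)*(t:ℂ)^2*u1*u2^2*u3*u4 + (-3)*(a:ℂ)^2*(r:ℂ)^2*z^2*u1*u2^2*u3 + (6)*(a:ℂ)^2*(r:ℂ)^2*(t:ℂ)*z*u1*u2^2*u3*u4 + (3/2)*(a:ℂ)^2*(r:ℂ)^2*(t:ℂ)^2*u1*u2^2*u3 + (-3)*(a:ℂ)^2*(r:ℂ)^3*z^2*u1*u2^2*u3*u4 + (-3)*(a:ℂ)^2*(r:ℂ)^3*(t:ℂ)*z*u1*u2^2*u3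 + (3/2)*(a:ℂ)^2*(r:ℂ)^3*(t:ℂ)^2*u1*u2^2*u3*u4 + (-1)*(a:ℂ)^2*(r:ℂ)^4*z^2*u1*u2^2*u3 + (2)*(a:ℂ)^2*(r:ℂ)^4*(t:ℂ)*z*u1*u2^2*u3*u4 + (1/2)*(a:ℂ)^2*(r:ℂ)^4*(t:ℂ)^2*u1*u2^2*u3 + (-1)*(a:ℂ)^2*(r:ℂ)^5*z^2*u1*u2^2*u3*u4 + (-1)*(a:ℂ)^2*(r:ℂ)^5*(t:ℂ)*z*u1*u2^2*u3 + (1/2)*(a:ℂ)^2*(r:ℂ)^5*(t:ℂ)^2*u1*u2^2*u3*u4) * hrel4 + ((2)*(a:ℂ)^2*(t:ℂ)^2*u1*u2^2*u3*u4^2 + (-4)*(a:ℂ)^2*(r:ℂ)*(t:ℂ)*z*u1*u2^2*u3*u4^2 + (2)*(a:ℂ)^2*(r:ℂ)^2*z^2*u1*u2^2*u3*u4^2 + (3)*(a:ℂ)^2*(r:ℂ)^2*(t:ℂ)^2*u1*u2^2*u3*u4^2 + (-6)*(a:ℂ)^2*(r:ℂ)^3*(t:ℂ)*z*u1*u2^2*u3*u4^2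 + (3)*(a:ℂ)^2*(r:ℂ)^4*z^2*u1*u2^2*u3*u4^2 + (1)*(a:ℂ)^2*(r:ℂ)^4*(t:ℂ)^2*u1*u2^2*u3*u4^2 + (-2)*(a:ℂ)^2*(r:ℂ)^5*(t:ℂ)*z*u1*u2^2*u3*u4^2 + (1)*(a:ℂ)^2*(r:ℂ)^6*z^2*u1*u2^2*u3*u4^2) * Complex.I_sq

section analysis

variable {a r : ℝ}

lemma qx_neg (ha : 0 < a) (hr : 0 < r) :
    a / 4 + a / 4 * ((1 - r ^ 2) / (r ^ 2 + 1)) - a / 2 < 0 := by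
  have h : a / 4 + a / 4 * ((1 - r ^ 2) / (r ^ 2 + 1)) - a / 2 = -(a * r ^ 2) / (2 * (r ^ 2 + 1)) := by
    field_simp
    ring
  rw [h]
  apply div_neg_of_neg_of_pos
  · have : 0 < a * r ^ 2 := by positivity
    linarith
  · positivity

lemma qy2_neg (ha : 0 < a) (hr : 0 < r) :
    -(a / 4) - a / 4 * ((1 - r ^ 2) / (r ^ 2 + 1)) < 0 := by
  have h : -(a / 4) - a / 4 * ((1 - r ^ 2) / (r ^ 2 + 1)) = -a / (2 * (r ^ 2 + 1)) := by
    field_simp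
    ring
  rw [h]
  apply div_neg_of_neg_of_pos
  · linarith
  · positivity

lemma qy_neg (ha : 0 < a) (hr : 0 < r) :
    -(a / 4) - a / 4 * ((1 - r ^ 2) / (r ^ 2 + 1)) - a / 2 < 0 := by
  have := qy2_neg ha hr
  linarith

lemma byR_neg (ha : 0 < a) (hr : 0 < r) : byR a r < 0 := by
  rw [byR]
  apply div_neg_of_neg_of_pos
  · have : 0 < a * (r ^ 2 + 2) := by positivity
    linarith
  · positivity

lemma bxR_neg (ha : 0 < a) (hr : 0 < r) : bxR a r < 0 := by
  rw [bxR]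
  apply div_neg_of_neg_of_pos
  · have : 0 < a * r ^ 2 := by positivity
    linarith
  · positivity

lemma cont_E (a r : ℝ) (z : ℂ) : Continuous fun q : (ℝ × ℝ) × ℝ => E a r z q.2 q.1.1 q.1.2 := by
  unfold E bet
  fun_prop

set_option maxHeartbeats 1000000 in
lemma int_fixed (ha : 0 < a) (hr : 0 < r) (z : ℂ) (t : ℝ) :
    Integrable (fun p : ℝ × ℝ => cexp (E a r z t p.1 p.2)) := by
  have key : ∀ p : ℝ × ℝ, ‖cexp (E a r z t p.1 p.2)‖ =
      Real.exp (-(a / 2) * t ^ 2) *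
        (Real.exp ((a / 4 + a / 4 * ((1 - r ^ 2) / (r ^ 2 + 1)) - a / 2) * p.1 ^ 2
            + (bet a r z).re * p.1) *
         Real.exp ((-(a / 4) - a / 4 * ((1 - r ^ 2) / (r ^ 2 + 1)) - a / 2) * p.2 ^ 2
            + (a * t + (bet a r z).im) * p.2)) := by
    intro p
    rw [Complex.norm_exp, E_re, ← Real.exp_add, ← Real.exp_add]
    congr 1
    ring
  have hint : Integrable (fun p : ℝ × ℝ =>
      Real.exp (-(a / 2) * t ^ 2) *
        (Real.exp ((a / 4 + a / 4 * ((1 - r ^ 2) / (r ^ 2 + 1)) - a / 2) * p.1 ^ 2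
            + (bet a r z).re * p.1) *
         Real.exp ((-(a / 4) - a / 4 * ((1 - r ^ 2) / (r ^ 2 + 1)) - a / 2) * p.2 ^ 2
            + (a * t + (bet a r z).im) * p.2))) := by
    have h := ((aux_integrable_exp_quad (qx_neg ha hr) ((bet a r z).re)).mul_prod
      (aux_integrable_exp_quad (qy_neg ha hr) (a * t + (bet a r z).im))).const_mul
      (Real.exp (-(a / 2) * t ^ 2))
    rwa [← Measure.volume_eq_prod] at h
  refine hint.mono' ?_ ?_
  · have hc : Continuous fun p : ℝ × ℝ => E a r z t p.1 p.2 := by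
      unfold E bet; fun_prop
    exact (Complex.continuous_exp.comp hc).aestronglyMeasurable
  · filter_upwards with p
    rw [key p]

set_option maxHeartbeats 1000000 in
lemma int_triple (ha : 0 < a) (hr : 0 < r) (z : ℂ) (g : SchwartzMap ℝ ℂ) :
    Integrable (Function.uncurry fun (p : ℝ × ℝ) (t : ℝ) => (g t : ℂ) * cexp (E a r z t p.1 p.2))
      ((volume : Measure (ℝ × ℝ)).prod (volume : Measure ℝ)) := by
  obtain ⟨Cg, hCg0, hCg⟩ := aux_schwartz_bound g
  set b1 := (bet a r z).re with hb1
  set b2 := (bet a r z).im with hb2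
  set qx := a / 4 + a / 4 * ((1 - r ^ 2) / (r ^ 2 + 1)) - a / 2 with hqx
  set qy2 := -(a / 4) - a / 4 * ((1 - r ^ 2) / (r ^ 2 + 1)) with hqy2
  have hD : Integrable (fun q : (ℝ × ℝ) × ℝ =>
      (Real.exp (qx * q.1.1 ^ 2 + |b1| * |q.1.1|) * Real.exp (qy2 * q.1.2 ^ 2 + |b2| * |q.1.2|)) *
        (Cg * (1 + q.2 ^ 2)⁻¹)) ((volume : Measure (ℝ × ℝ)).prod (volume : Measure ℝ)) := by
    have h1 := (aux_integrable_exp_quad_abs (qx_neg ha hr) |b1|).mul_prod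
      (aux_integrable_exp_quad_abs (qy2_neg ha hr) |b2|)
    rw [← Measure.volume_eq_prod] at h1
    exact h1.mul_prod (integrable_inv_one_add_sq.const_mul Cg)
  refine hD.mono' ?_ ?_
  · apply Continuous.aestronglyMeasurable
    have hgc := g.continuous
    have := cont_E a r z
    fun_prop
  · filter_upwards with q
    set t := q.2
    set x := q.1.1
    set y := q.1.2
    have hre : (E a r z t x y).re ≤ qx * x ^ 2 + |b1| * |x| + (qy2 * y ^ 2 + |b2| * |y|) := by
      have heq : (E a r z t x y).re =
          (a * t * y - a / 2 * t ^ 2 - a / 2 * y ^ 2) + qx * x ^ 2 + qy2 * y ^ 2 + b1 * x + b2 * y := by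
        rw [E_re, hqx, hqy2, hb1, hb2]
        ring
      have h1 : a * t * y - a / 2 * t ^ 2 - a / 2 * y ^ 2 ≤ 0 := by nlinarith [sq_nonneg (t - y)]
      have h2 : b1 * x ≤ |b1| * |x| := (le_abs_self _).trans (abs_mul b1 x).le
      have h3 : b2 * y ≤ |b2| * |y| := (le_abs_self _).trans (abs_mul b2 y).le
      rw [heq]
      linarith
    have hnorm : ‖(g t : ℂ) * cexp (E a r z t x y)‖ = ‖g t‖ * Real.exp ((E a r z t x y).re) := by
      rw [norm_mul, Complex.norm_exp]
    show ‖(g t : ℂ) * cexp (E a r z t x y)‖ ≤ _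
    rw [hnorm]
    have hg1 : ‖g t‖ ≤ Cg * (1 + t ^ 2)⁻¹ := hCg t
    have he1 : Real.exp ((E a r z t x y).re) ≤
        Real.exp (qx * x ^ 2 + |b1| * |x|) * Real.exp (qy2 * y ^ 2 + |b2| * |y|) := by
      rw [← Real.exp_add]
      exact Real.exp_le_exp.2 hre
    calc ‖g t‖ * Real.exp ((E a r z t x y).re)
        ≤ (Cg * (1 + t ^ 2)⁻¹) * (Real.exp (qx * x ^ 2 + |b1| * |x|) * Real.exp (qy2 * y ^ 2 + |b2| * |y|)) := by
          apply mul_le_mul hg1 he1 (Real.exp_pos _).le (by positivity)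
      _ = (Real.exp (qx * x ^ 2 + |b1| * |x|) * Real.exp (qy2 * y ^ 2 + |b2| * |y|)) * (Cg * (1 + t ^ 2)⁻¹) := by
          ring

set_option maxHeartbeats 1000000 in
lemma double_int (ha : 0 < a) (hr : 0 < r) (z : ℂ) (t : ℝ) :
    ∫ p : ℝ × ℝ, cexp (E a r z t p.1 p.2) =
      ((Real.pi : ℂ) / -((byR a r : ℝ) : ℂ)) ^ ((1 : ℂ) / 2) *
        (((Real.pi : ℂ) / -((bxR a r : ℝ) : ℂ)) ^ ((1 : ℂ) / 2) * cexp (Qf a r z t)) := by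
  have hb : (((byR a r : ℝ) : ℂ)).re < 0 := by
    simpa using byR_neg ha hr
  have hbx : (((bxR a r : ℝ) : ℂ)).re < 0 := by
    simpa using bxR_neg ha hr
  have hint := int_fixed ha hr z t
  rw [Measure.volume_eq_prod] at hint
  rw [Measure.volume_eq_prod, integral_prod _ hint]
  have hy : ∀ x : ℝ, ∫ y : ℝ, cexp (E a r z t x y) =
      ((Real.pi : ℂ) / -((byR a r : ℝ) : ℂ)) ^ ((1 : ℂ) / 2) *
        cexp (dy a r z t x - (cy a r z t x) ^ 2 / (4 * ((byR a r : ℝ) : ℂ))) := by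
    intro x
    have : ∀ y : ℝ, E a r z t x y =
        ((byR a r : ℝ) : ℂ) * (y : ℂ) ^ 2 + cy a r z t x * (y : ℂ) + dy a r z t x :=
      fun y => hS1 a r z t x y
    simp_rw [this]
    exact integral_cexp_quadratic hb _ _
  simp_rw [hy, hS2 ha hr z t, integral_const_mul, integral_cexp_quadratic hbx, hS4 ha hr z t]

set_option maxHeartbeats 1000000 in
lemma hFlem (ha : 0 < a) (hr : 0 < r) (z : ℂ) (g : SchwartzMap ℝ ℂ) (p : ℝ × ℝ) :
    bargmann a (fun x : ℝ => g x) (-Complex.I * ((p.1 : ℂ) + (p.2 : ℂ) * Complex.I)) *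
        Complex.exp ((a / 4) * (starRingEnd ℂ) ((p.1 : ℂ) + (p.2 : ℂ) * Complex.I) ^ 2 *
          ((1 - r ^ 2) / (r ^ 2 + 1))) *
        Complex.exp (Complex.I * a * r * z * (starRingEnd ℂ) ((p.1 : ℂ) + (p.2 : ℂ) * Complex.I) /
          (r ^ 2 + 1)) *
        (gaussianDensity a ((p.1 : ℂ) + (p.2 : ℂ) * Complex.I) : ℂ) =
      (((a / Real.pi) ^ ((1 : ℝ) / 4) : ℝ) : ℂ) * ((a / (2 * Real.pi) : ℝ) : ℂ) *
        ∫ t : ℝ, (g t : ℂ) * cexp (E a r z t p.1 p.2) := by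
  have hconj : (starRingEnd ℂ) ((p.1 : ℂ) + (p.2 : ℂ) * I) = (p.1 : ℂ) - (p.2 : ℂ) * I := by
    rw [map_add, map_mul, Complex.conj_ofReal, Complex.conj_ofReal, Complex.conj_I]
    ring
  have habs : ‖(p.1 : ℂ) + (p.2 : ℂ) * I‖ ^ 2 = p.1 ^ 2 + p.2 ^ 2 := by
    rw [Complex.sq_norm]
    exact Complex.normSq_add_mul_I _ _
  rw [bargmann, gaussianDensity, hconj, habs, Complex.ofReal_mul, Complex.ofReal_exp]
  have hsplit : ∀ t : ℝ, cexp (E a r z t p.1 p.2) =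
      cexp ((a : ℂ) * (t : ℂ) * (-I * ((p.1 : ℂ) + (p.2 : ℂ) * I)) - (a : ℂ) / 2 * (t : ℂ) ^ 2 -
          (a : ℂ) / 4 * (-I * ((p.1 : ℂ) + (p.2 : ℂ) * I)) ^ 2) *
        (cexp ((a : ℂ) / 4 * ((p.1 : ℂ) - (p.2 : ℂ) * I) ^ 2 * ((1 - (r : ℂ) ^ 2) / ((r : ℂ) ^ 2 + 1))) *
          cexp (I * (a : ℂ) * (r : ℂ) * z * ((p.1 : ℂ) - (p.2 : ℂ) * I) / ((r : ℂ) ^ 2 + 1)) *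
          cexp ((-(a / 2) * (p.1 ^ 2 + p.2 ^ 2) : ℝ) : ℂ)) := by
    intro t
    rw [← Complex.exp_add, ← Complex.exp_add, ← Complex.exp_add, E, bet]
    rw [show ((r : ℂ) ^ 2 + 1) = ((r ^ 2 + 1 : ℝ) : ℂ) from by push_cast; ring]
    congr 1
    push_cast
    linear_combination ((a : ℂ) / 4 * ((p.1 : ℂ) + (p.2 : ℂ) * I) ^ 2) * Complex.I_sq
  simp_rw [hsplit, ← mul_assoc, integral_mul_const]
  ring

lemma const_eq (ha : 0 < a) (hr : 0 < r) :
    ((r⁻¹ : ℝ) : ℂ) =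
      ((Real.sqrt (2 / (r ^ 2 + 1)) : ℝ) : ℂ) * ((a / (2 * Real.pi) : ℝ) : ℂ) *
        (((Real.pi : ℂ) / -((byR a r : ℝ) : ℂ)) ^ ((1 : ℂ) / 2) *
          ((Real.pi : ℂ) / -((bxR a r : ℝ) : ℂ)) ^ ((1 : ℂ) / 2)) := by
  have hby := byR_neg ha hr
  have hbx := bxR_neg ha hr
  have h1 : ((Real.pi : ℂ) / -((byR a r : ℝ) : ℂ)) = ((Real.pi / -byR a r : ℝ) : ℂ) := by
    push_cast; ring
  have h2 : ((Real.pi : ℂ) / -((bxR a r : ℝ) : ℂ)) = ((Real.pi / -bxR a r : ℝ) : ℂ) := by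
    push_cast; ring
  have hhalf : ((1 : ℂ) / 2) = (((1 : ℝ) / 2 : ℝ) : ℂ) := by norm_num
  have hpos1 : (0 : ℝ) ≤ Real.pi / -byR a r := by
    apply div_nonneg Real.pi_pos.le; linarith
  have hpos2 : (0 : ℝ) ≤ Real.pi / -bxR a r := by
    apply div_nonneg Real.pi_pos.le; linarith
  rw [h1, h2, hhalf, ← Complex.ofReal_cpow hpos1, ← Complex.ofReal_cpow hpos2,
    ← Complex.ofReal_mul, ← Complex.ofReal_mul, ← Complex.ofReal_mul]
  rw [Complex.ofReal_inj]
  have hsq1 : (Real.pi / -byR a r) ^ ((1:ℝ)/2) = Real.sqrt (Real.pi / -byR a r) :=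
    (Real.sqrt_eq_rpow _).symm
  have hsq2 : (Real.pi / -bxR a r) ^ ((1:ℝ)/2) = Real.sqrt (Real.pi / -bxR a r) :=
    (Real.sqrt_eq_rpow _).symm
  rw [hsq1, hsq2]
  have harg : (2 / (r ^ 2 + 1)) * ((Real.pi / -byR a r) * (Real.pi / -bxR a r)) =
      (2 * Real.pi / (a * r)) ^ 2 := by
    rw [byR, bxR]
    have h3 : r ^ 2 + 1 ≠ 0 := by positivity
    have h4 : r ^ 2 + 2 ≠ 0 := by positivity
    field_simp
  have hcomb : Real.sqrt (2 / (r ^ 2 + 1)) * (Real.sqrt (Real.pi / -byR a r) *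
      Real.sqrt (Real.pi / -bxR a r)) = 2 * Real.pi / (a * r) := by
    rw [← Real.sqrt_mul (by positivity), ← Real.sqrt_mul (by positivity), harg]
    exact Real.sqrt_sq (by positivity)
  calc r⁻¹ = (a / (2 * Real.pi)) * (2 * Real.pi / (a * r)) := by
        field_simp
    _ = Real.sqrt (2 / (r ^ 2 + 1)) * (a / (2 * Real.pi)) *
          (Real.sqrt (Real.pi / -byR a r) * Real.sqrt (Real.pi / -bxR a r)) := by
        rw [← hcomb]; ring

set_option maxHeartbeats 1000000 in
lemma hLexp (ha : 0 < a) (hr : 0 < r) (z : ℂ) (x : ℝ) :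
    (a : ℂ) * (x : ℂ) * z - (a : ℂ) / 2 * (x : ℂ) ^ 2 - (a : ℂ) / 4 * z ^ 2 =
      Qf a r z (r * x) + ((a : ℂ) / 2 * z ^ 2 / ((r ^ 2 + 1 : ℝ) : ℂ) - (a : ℂ) / 4 * z ^ 2) := by
  rw [Qf]
  simp only [div_eq_mul_inv]
  generalize hU1 : (((r ^ 2 + 1 : ℝ) : ℂ))⁻¹ = u1
  generalize hU4 : ((r : ℂ))⁻¹ = u4
  have hrel1 : ((r : ℂ) ^ 2 + 1) * u1 = 1 := by
    rw [← hU1, show ((r : ℂ) ^ 2 + 1) = ((r ^ 2 + 1 : ℝ) : ℂ) from by push_cast; ring]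
    exact mul_inv_cancel₀ (Complex.ofReal_ne_zero.2 (by positivity))
  have hrel4 : (r : ℂ) * u4 = 1 := by
    rw [← hU4]; exact mul_inv_cancel₀ (Complex.ofReal_ne_zero.2 hr.ne')
  push_cast
  linear_combination ((-1)*(a:ℂ)*(x:ℂ)*z + (1/2)*(a:ℂ)*(x:ℂ)^2 + (1/2)*(a:ℂ)*(r:ℂ)*(x:ℂ)^2*u4) * hrel4

set_option maxHeartbeats 1000000 in
lemma hCcor (ha : 0 < a) (hr : 0 < r) (z : ℂ) :
    (a : ℂ) / 2 * z ^ 2 / ((r ^ 2 + 1 : ℝ) : ℂ) - (a : ℂ) / 4 * z ^ 2 =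
      -((a : ℂ) / 4) * z ^ 2 * (((r : ℂ) ^ 2 - 1) / ((r : ℂ) ^ 2 + 1)) := by
  rw [show ((r : ℂ) ^ 2 + 1) = ((r ^ 2 + 1 : ℝ) : ℂ) from by push_cast; ring]
  simp only [div_eq_mul_inv]
  generalize hU1 : (((r ^ 2 + 1 : ℝ) : ℂ))⁻¹ = u1
  have hrel1 : ((r : ℂ) ^ 2 + 1) * u1 = 1 := by
    rw [← hU1, show ((r : ℂ) ^ 2 + 1) = ((r ^ 2 + 1 : ℝ) : ℂ) from by push_cast; ring]
    exact mul_inv_cancel₀ (Complex.ofReal_ne_zero.2 (by positivity))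
  push_cast
  linear_combination ((1/4)*(a:ℂ)*z^2) * hrel1

end analysis

end BDA

set_option maxHeartbeats 1000000 in
/-- For a Schwartz function `g` and `r > 0`, the Bargmann transform of the dilation
`(h_r g)(x) = g(rx)` is given by an integral over `ℂ` against the Gaussian measure
`dλ_{a/2}`, and that integral converges. -/
theorem bargmann_dilation (a r : ℝ) (ha : 0 < a) (hr : 0 < r)
    (g : SchwartzMap ℝ ℂ) (z : ℂ) :
    MeasureTheory.Integrable
      (fun w : ℂ => bargmann a (fun x : ℝ => g x) (-Complex.I * w) *
        Complex.exp ((a / 4) * (starRingEnd ℂ) w ^ 2 * ((1 - r ^ 2) / (r ^ 2 + 1))) *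
        Complex.exp (Complex.I * a * r * z * (starRingEnd ℂ) w / (r ^ 2 + 1)) *
        (gaussianDensity a w : ℂ)) (volume : Measure ℂ) ∧
    bargmann a (fun x : ℝ => g (r * x)) z =
      (Real.sqrt (2 / (r ^ 2 + 1)) : ℂ) *
        Complex.exp (-(a / 4) * z ^ 2 * ((r ^ 2 - 1) / (r ^ 2 + 1))) *
        ∫ w : ℂ, bargmann a (fun x : ℝ => g x) (-Complex.I * w) *
          Complex.exp ((a / 4) * (starRingEnd ℂ) w ^ 2 * ((1 - r ^ 2) / (r ^ 2 + 1))) *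
          Complex.exp (Complex.I * a * r * z * (starRingEnd ℂ) w / (r ^ 2 + 1)) *
          (gaussianDensity a w : ℂ) := by
  have hmp := Complex.volume_preserving_equiv_real_prod.symm Complex.measurableEquivRealProd
  have hme := Complex.measurableEquivRealProd.symm.measurableEmbedding
  have hsymm : ∀ p : ℝ × ℝ,
      (Complex.measurableEquivRealProd.symm p : ℂ) = (p.1 : ℂ) + (p.2 : ℂ) * I := by
    intro p
    rw [Complex.measurableEquivRealProd_symm_apply, Complex.mk_eq_add_mul_I]
  constructor
  · rw [← MeasurePreserving.integrable_comp_emb hmp hme]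
    refine Integrable.congr
      (((BDA.int_triple ha hr z g).integral_prod_left).const_mul
        ((((a / Real.pi) ^ ((1 : ℝ) / 4) : ℝ) : ℂ) * ((a / (2 * Real.pi) : ℝ) : ℂ))) ?_
    filter_upwards with p
    simp only [Function.comp_apply]
    rw [hsymm p]
    exact (BDA.hFlem ha hr z g p).symm
  · rw [← MeasurePreserving.integral_comp hmp hme]
    simp_rw [hsymm]
    simp_rw [BDA.hFlem ha hr z g]
    rw [MeasureTheory.integral_const_mul,
      MeasureTheory.integral_integral_swap (BDA.int_triple ha hr z g)]
    simp_rw [MeasureTheory.integral_const_mul, BDA.double_int ha hr z]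
    simp_rw [show ∀ t : ℝ, (g t : ℂ) *
        (((Real.pi : ℂ) / -((BDA.byR a r : ℝ) : ℂ)) ^ ((1 : ℂ) / 2) *
          (((Real.pi : ℂ) / -((BDA.bxR a r : ℝ) : ℂ)) ^ ((1 : ℂ) / 2) * cexp (BDA.Qf a r z t))) =
        (g t : ℂ) * cexp (BDA.Qf a r z t) *
          (((Real.pi : ℂ) / -((BDA.byR a r : ℝ) : ℂ)) ^ ((1 : ℂ) / 2) *
            ((Real.pi : ℂ) / -((BDA.bxR a r : ℝ) : ℂ)) ^ ((1 : ℂ) / 2)) from fun t => by ring]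
    rw [MeasureTheory.integral_mul_const]
    rw [bargmann]
    have hL : (fun x : ℝ => (g (r * x) : ℂ) *
        cexp ((a : ℂ) * (x : ℂ) * z - (a : ℂ) / 2 * (x : ℂ) ^ 2 - (a : ℂ) / 4 * z ^ 2)) =
        fun x : ℝ => (fun u : ℝ => (g u : ℂ) * cexp (BDA.Qf a r z u) *
          cexp ((a : ℂ) / 2 * z ^ 2 / ((r ^ 2 + 1 : ℝ) : ℂ) - (a : ℂ) / 4 * z ^ 2)) (r * x) := by
      funext x
      show _ = (g (r * x) : ℂ) * cexp (BDA.Qf a r z (r * x)) *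
          cexp ((a : ℂ) / 2 * z ^ 2 / ((r ^ 2 + 1 : ℝ) : ℂ) - (a : ℂ) / 4 * z ^ 2)
      conv_rhs => rw [mul_assoc, ← Complex.exp_add]
      rw [BDA.hLexp ha hr z x]
    rw [hL, MeasureTheory.Measure.integral_comp_mul_left
      (fun u : ℝ => (g u : ℂ) * cexp (BDA.Qf a r z u) *
        cexp ((a : ℂ) / 2 * z ^ 2 / ((r ^ 2 + 1 : ℝ) : ℂ) - (a : ℂ) / 4 * z ^ 2)) r]
    rw [abs_inv, abs_of_pos hr, Complex.real_smul, MeasureTheory.integral_mul_const]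
    rw [BDA.hCcor ha hr z]
    have hc := BDA.const_eq ha hr
    linear_combination ((((a / Real.pi) ^ ((1 : ℝ) / 4) : ℝ) : ℂ) *
      (∫ u : ℝ, (g u : ℂ) * cexp (BDA.Qf a r z u)) *
      cexp (-((a : ℂ) / 4) * z ^ 2 * (((r : ℂ) ^ 2 - 1) / ((r : ℂ) ^ 2 + 1)))) * hc
end
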